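/- Let F = F₁ × ⋯ × F_d, where each F_i is a closed subset of [0,1] containing 0 and 1, and let f : F → ℝ be continuous. Then there exists a unique continuous function g : [0,1]^d → ℝ equal to f on F such that for every i ∈ {1,…,d} and every t ∈ [0,1]^d, the one-dimensional cut u_i ↦ g(u_i, t_{∼i}) is affine on each interval contained in [0,1] \ F_i. This g is called the multiaffine extension P_{F→[0,1]^d}(f). -/

import Mathlib

open Set
open scoped Classical

/-- Closest left neighbor of `t` in `B`. -/
noncomputable def leftN (B : Set ℝ) (t : ℝ) : ℝ := sSup {u ∈ B | u ≤ t}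

/-- Closest right neighbor of `t` in `B`. -/
noncomputable def rightN (B : Set ℝ) (t : ℝ) : ℝ := sInf {u ∈ B | t ≤ u}

/-- The affine extension `L_B g` of a function `g` defined on `B` to `[0,1]`. -/
noncomputable def affExt (B : Set ℝ) (g : ℝ → ℝ) (t : ℝ) : ℝ :=
  if t ∈ B then g t
  else (1 - (t - leftN B t) / (rightN B t - leftN B t)) * g (leftN B t)
    + (t - leftN B t) / (rightN B t - leftN B t) * g (rightN B t)

/-- Neighbor `t^ε` of `t` in `Fi` (with the convention `t^- = t^+ = t` for `t ∈ Fi`). -/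
noncomputable def nbr (Fi : Set ℝ) (t : ℝ) (ε : Bool) : ℝ :=
  if t ∈ Fi then t else if ε then rightN Fi t else leftN Fi t

/-- Weight `ω_ε(t)` (with the convention `ω_-(t) = ω_+(t) = 1/2` for `t ∈ Fi`). -/
noncomputable def wt (Fi : Set ℝ) (t : ℝ) (ε : Bool) : ℝ :=
  if t ∈ Fi then 1/2
  else if ε then (t - leftN Fi t) / (rightN Fi t - leftN Fi t)
  else 1 - (t - leftN Fi t) / (rightN Fi t - leftN Fi t)

/-- The multiaffine extension `P_{F → [0,1]^d}(f)`, via its explicit formula. -/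
noncomputable def multiExt {d : ℕ} (F : Fin d → Set ℝ) (f : (Fin d → ℝ) → ℝ)
    (t : Fin d → ℝ) : ℝ :=
  ∑ ε : Fin d → Bool, (∏ j, wt (F j) (t j) (ε j)) * f (fun j => nbr (F j) (t j) (ε j))

/-- The unit cube `[0,1]^d`. -/
def cube (d : ℕ) : Set (Fin d → ℝ) := Set.pi Set.univ fun _ => Set.Icc (0:ℝ) 1

section OneDim

variable {B : Set ℝ}

lemma leftN_spec (hBc : IsClosed B) (hB0 : (0:ℝ) ∈ B) {t : ℝ} (ht : 0 ≤ t) :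
    leftN B t ∈ B ∧ leftN B t ≤ t := by
  have hne : Set.Nonempty {u ∈ B | u ≤ t} := ⟨0, hB0, ht⟩
  have hbdd : BddAbove {u ∈ B | u ≤ t} := ⟨t, fun x hx => hx.2⟩
  have hcl : IsClosed {u ∈ B | u ≤ t} := by
    have : {u ∈ B | u ≤ t} = B ∩ Iic t := rfl
    rw [this]; exact hBc.inter isClosed_Iic
  have h := hcl.csSup_mem hne hbdd
  exact ⟨h.1, h.2⟩

lemma rightN_spec (hBc : IsClosed B) (hB1 : (1:ℝ) ∈ B) {t : ℝ} (ht : t ≤ 1) :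
    rightN B t ∈ B ∧ t ≤ rightN B t := by
  have hne : Set.Nonempty {u ∈ B | t ≤ u} := ⟨1, hB1, ht⟩
  have hbdd : BddBelow {u ∈ B | t ≤ u} := ⟨t, fun x hx => hx.2⟩
  have hcl : IsClosed {u ∈ B | t ≤ u} := by
    have : {u ∈ B | t ≤ u} = B ∩ Ici t := rfl
    rw [this]; exact hBc.inter isClosed_Ici
  have h := hcl.csInf_mem hne hbdd
  exact ⟨h.1, h.2⟩

lemma leftN_lt (hBc : IsClosed B) (hB0 : (0:ℝ) ∈ B) {t : ℝ} (ht : 0 ≤ t) (htB : t ∉ B) :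
    leftN B t < t :=
  lt_of_le_of_ne (leftN_spec hBc hB0 ht).2 (fun h => htB (h ▸ (leftN_spec hBc hB0 ht).1))

lemma rightN_gt (hBc : IsClosed B) (hB1 : (1:ℝ) ∈ B) {t : ℝ} (ht : t ≤ 1) (htB : t ∉ B) :
    t < rightN B t :=
  lt_of_le_of_ne (rightN_spec hBc hB1 ht).2 (fun h => htB (h ▸ (rightN_spec hBc hB1 ht).1))

lemma gap_not_mem {t v : ℝ} (hv : v ∈ Ioo (leftN B t) (rightN B t)) : v ∉ B := by
  intro hvB
  rcases le_total v t with h | h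
  · exact absurd (le_csSup ⟨t, fun x hx => hx.2⟩ (⟨hvB, h⟩ : v ∈ {u ∈ B | u ≤ t})) (not_le.2 hv.1)
  · exact absurd (csInf_le ⟨t, fun x hx => hx.2⟩ (⟨hvB, h⟩ : v ∈ {u ∈ B | t ≤ u})) (not_le.2 hv.2)

lemma leftN_const {a b u : ℝ} (hgap : ∀ v ∈ Ioo a b, v ∉ B) (hu : u ∈ Ioo a b) :
    leftN B u = leftN B a := by
  unfold leftN
  congr 1
  ext v
  constructor
  · rintro ⟨hvB, hle⟩
    refine ⟨hvB, ?_⟩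
    by_contra h
    exact hgap v ⟨not_le.1 h, lt_of_le_of_lt hle hu.2⟩ hvB
  · rintro ⟨hvB, hle⟩
    exact ⟨hvB, hle.trans hu.1.le⟩

lemma rightN_const {a b u : ℝ} (hgap : ∀ v ∈ Ioo a b, v ∉ B) (hu : u ∈ Ioo a b) :
    rightN B u = rightN B b := by
  unfold rightN
  congr 1
  ext v
  constructor
  · rintro ⟨hvB, hle⟩
    refine ⟨hvB, ?_⟩
    by_contra h
    exact hgap v ⟨lt_of_lt_of_le hu.1 hle, not_le.1 h⟩ hvB
  · rintro ⟨hvB, hle⟩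
    exact ⟨hvB, hu.2.le.trans hle⟩

end OneDim
section W
variable {B : Set ℝ}

lemma wt_add (t : ℝ) : wt B t false + wt B t true = 1 := by
  unfold wt
  by_cases h : t ∈ B <;> simp [h] <;> try ring

lemma wt_nonneg (hBc : IsClosed B) (hB0 : (0:ℝ) ∈ B) (hB1 : (1:ℝ) ∈ B)
    {t : ℝ} (ht : t ∈ Icc (0:ℝ) 1) (b : Bool) : 0 ≤ wt B t b := by
  unfold wt
  by_cases h : t ∈ B
  · simp [h]
  · have hl := leftN_lt hBc hB0 ht.1 h
    have hr := rightN_gt hBc hB1 ht.2 h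
    have hd : 0 < rightN B t - leftN B t := by linarith
    have h1 : 0 ≤ (t - leftN B t) / (rightN B t - leftN B t) :=
      div_nonneg (by linarith) hd.le
    have h2 : (t - leftN B t) / (rightN B t - leftN B t) ≤ 1 := by
      rw [div_le_one hd]; linarith
    simp only [h, if_false]
    cases b <;> simp <;> linarith

lemma nbr_mem (hBc : IsClosed B) (hB0 : (0:ℝ) ∈ B) (hB1 : (1:ℝ) ∈ B)
    {t : ℝ} (ht : t ∈ Icc (0:ℝ) 1) (b : Bool) : nbr B t b ∈ B := by
  unfold nbr
  by_cases h : t ∈ B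
  · simp [h]
  · simp only [h, if_false]
    cases b
    · simpa using (leftN_spec hBc hB0 ht.1).1
    · simpa using (rightN_spec hBc hB1 ht.2).1

lemma wt_mul_add_wt_mul (h : ℝ → ℝ) (t : ℝ) :
    wt B t false * h (nbr B t false) + wt B t true * h (nbr B t true) = affExt B h t := by
  unfold wt nbr affExt
  by_cases ht : t ∈ B <;> simp [ht] <;> try ring

end W
section Quant
variable {B : Set ℝ} {h : ℝ → ℝ} {M ε δ₀ δ : ℝ}

lemma M_nonneg (hB0 : (0:ℝ) ∈ B) (hM : ∀ x ∈ B, |h x| ≤ M) : 0 ≤ M :=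
  le_trans (abs_nonneg _) (hM 0 hB0)

lemma affExt_eq_of_mem {u : ℝ} (huB : u ∈ B) : affExt B h u = h u := by
  unfold affExt; simp [huB]

lemma affExt_eq_of_not_mem {u : ℝ} (huB : u ∉ B) :
    affExt B h u = (1 - (u - leftN B u) / (rightN B u - leftN B u)) * h (leftN B u)
      + (u - leftN B u) / (rightN B u - leftN B u) * h (rightN B u) := by
  unfold affExt; simp [huB]

lemma halfStep_left (hBc : IsClosed B) (hB0 : (0:ℝ) ∈ B) (hB1 : (1:ℝ) ∈ B)
    (hM : ∀ x ∈ B, |h x| ≤ M)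
    (hmod : ∀ x ∈ B, ∀ y ∈ B, |x - y| ≤ δ₀ → |h x - h y| ≤ ε)
    (hδ₀ : 0 < δ₀) (hε : 0 ≤ ε) {u : ℝ} (hu : u ∈ Icc (0:ℝ) 1) (huB : u ∉ B) :
    |affExt B h u - h (leftN B u)| ≤ ε + 2*M*(u - leftN B u)/δ₀ := by
  have hM0 : 0 ≤ M := M_nonneg hB0 hM
  set l := leftN B u with hl_def
  set r := rightN B u with hr_def
  have hlB := (leftN_spec hBc hB0 hu.1).1
  have hrB := (rightN_spec hBc hB1 hu.2).1
  have hl := leftN_lt hBc hB0 hu.1 huB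
  have hr := rightN_gt hBc hB1 hu.2 huB
  have hD : 0 < r - l := by linarith
  have hθ0 : 0 ≤ (u - l) / (r - l) := div_nonneg (by linarith) hD.le
  have hkey : affExt B h u - h l = (u - l) / (r - l) * (h r - h l) := by
    rw [affExt_eq_of_not_mem huB]; ring
  rw [hkey, abs_mul, abs_of_nonneg hθ0]
  rcases le_or_gt (r - l) δ₀ with hc | hc
  · have hA : |h r - h l| ≤ ε := hmod r hrB l hlB (by rw [abs_of_nonneg hD.le]; linarith)
    have hθ1 : (u - l) / (r - l) ≤ 1 := by rw [div_le_one hD]; linarith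
    have : (u - l) / (r - l) * |h r - h l| ≤ ε :=
      le_trans (mul_le_mul hθ1 hA (abs_nonneg _) zero_le_one) (by simp)
    have hnn : 0 ≤ 2*M*(u - l)/δ₀ := div_nonneg (mul_nonneg (by linarith) (by linarith)) hδ₀.le
    linarith
  · have hA : |h r - h l| ≤ 2*M := by
      calc |h r - h l| ≤ |h r| + |h l| := abs_sub _ _
        _ ≤ M + M := add_le_add (hM r hrB) (hM l hlB)
        _ = 2*M := by ring
    have hθ : (u - l) / (r - l) ≤ (u - l) / δ₀ :=
      div_le_div_of_nonneg_left (by linarith) hδ₀ hc.le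
    have : (u - l) / (r - l) * |h r - h l| ≤ (u - l)/δ₀ * (2*M) :=
      mul_le_mul hθ hA (abs_nonneg _) (div_nonneg (by linarith) hδ₀.le)
    have heq : (u - l)/δ₀ * (2*M) = 2*M*(u - l)/δ₀ := by ring
    linarith

lemma halfStep_right (hBc : IsClosed B) (hB0 : (0:ℝ) ∈ B) (hB1 : (1:ℝ) ∈ B)
    (hM : ∀ x ∈ B, |h x| ≤ M)
    (hmod : ∀ x ∈ B, ∀ y ∈ B, |x - y| ≤ δ₀ → |h x - h y| ≤ ε)
    (hδ₀ : 0 < δ₀) (hε : 0 ≤ ε) {u : ℝ} (hu : u ∈ Icc (0:ℝ) 1) (huB : u ∉ B) :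
    |affExt B h u - h (rightN B u)| ≤ ε + 2*M*(rightN B u - u)/δ₀ := by
  have hM0 : 0 ≤ M := M_nonneg hB0 hM
  set l := leftN B u with hl_def
  set r := rightN B u with hr_def
  have hlB := (leftN_spec hBc hB0 hu.1).1
  have hrB := (rightN_spec hBc hB1 hu.2).1
  have hl := leftN_lt hBc hB0 hu.1 huB
  have hr := rightN_gt hBc hB1 hu.2 huB
  have hD : 0 < r - l := by linarith
  have hθ0 : 0 ≤ (r - u) / (r - l) := div_nonneg (by linarith) hD.le
  have hkey : affExt B h u - h r = (r - u) / (r - l) * (h l - h r) := by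
    rw [affExt_eq_of_not_mem huB, ← hl_def, ← hr_def]
    have hne : r - l ≠ 0 := hD.ne'
    field_simp
    ring
  rw [hkey, abs_mul, abs_of_nonneg hθ0]
  rcases le_or_gt (r - l) δ₀ with hc | hc
  · have hA : |h l - h r| ≤ ε := hmod l hlB r hrB (by rw [abs_of_nonpos (by linarith)]; linarith)
    have hθ1 : (r - u) / (r - l) ≤ 1 := by rw [div_le_one hD]; linarith
    have : (r - u) / (r - l) * |h l - h r| ≤ ε :=
      le_trans (mul_le_mul hθ1 hA (abs_nonneg _) zero_le_one) (by simp)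
    have hnn : 0 ≤ 2*M*(r - u)/δ₀ := div_nonneg (mul_nonneg (by linarith) (by linarith)) hδ₀.le
    linarith
  · have hA : |h l - h r| ≤ 2*M := by
      calc |h l - h r| ≤ |h l| + |h r| := abs_sub _ _
        _ ≤ M + M := add_le_add (hM l hlB) (hM r hrB)
        _ = 2*M := by ring
    have hθ : (r - u) / (r - l) ≤ (r - u) / δ₀ :=
      div_le_div_of_nonneg_left (by linarith) hδ₀ hc.le
    have : (r - u) / (r - l) * |h l - h r| ≤ (r - u)/δ₀ * (2*M) :=
      mul_le_mul hθ hA (abs_nonneg _) (div_nonneg (by linarith) hδ₀.le)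
    have heq : (r - u)/δ₀ * (2*M) = 2*M*(r - u)/δ₀ := by ring
    linarith

lemma fromF (hBc : IsClosed B) (hB0 : (0:ℝ) ∈ B) (hB1 : (1:ℝ) ∈ B)
    (hM : ∀ x ∈ B, |h x| ≤ M)
    (hmod : ∀ x ∈ B, ∀ y ∈ B, |x - y| ≤ δ₀ → |h x - h y| ≤ ε)
    (hδ₀ : 0 < δ₀) (hε : 0 ≤ ε) (hδδ₀ : δ ≤ δ₀)
    {p u' : ℝ} (hp : p ∈ B) (hu' : u' ∈ Icc (0:ℝ) 1) (hle : p ≤ u') (hclose : u' - p ≤ δ) :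
    |h p - affExt B h u'| ≤ 2*ε + 2*M*δ/δ₀ := by
  have hM0 : 0 ≤ M := M_nonneg hB0 hM
  have hδ0 : 0 ≤ δ := le_trans (by linarith) hclose
  have hnn : 0 ≤ 2*M*δ/δ₀ := div_nonneg (mul_nonneg (by linarith) hδ0) hδ₀.le
  by_cases hu'B : u' ∈ B
  · rw [affExt_eq_of_mem hu'B]
    have := hmod p hp u' hu'B (by rw [abs_of_nonpos (by linarith)]; linarith)
    linarith
  · set l' := leftN B u' with hl'_def
    have hl'B := (leftN_spec hBc hB0 hu'.1).1
    have hl'le := (leftN_spec hBc hB0 hu'.1).2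
    have hpl' : p ≤ l' := le_csSup ⟨u', fun x hx => hx.2⟩ ⟨hp, hle⟩
    have h1 : |h p - h l'| ≤ ε := hmod p hp l' hl'B (by rw [abs_of_nonpos (by linarith)]; linarith)
    have h2 : |affExt B h u' - h l'| ≤ ε + 2*M*(u' - l')/δ₀ :=
      halfStep_left hBc hB0 hB1 hM hmod hδ₀ hε hu' hu'B
    have h3 : 2*M*(u' - l')/δ₀ ≤ 2*M*δ/δ₀ :=
      div_le_div₀ (by nlinarith) (by nlinarith) hδ₀ le_rfl
    calc |h p - affExt B h u'| ≤ |h p - h l'| + |h l' - affExt B h u'| := abs_sub_le _ _ _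
      _ = |h p - h l'| + |affExt B h u' - h l'| := by rw [abs_sub_comm (h l')]
      _ ≤ ε + (ε + 2*M*δ/δ₀) := by linarith
      _ = 2*ε + 2*M*δ/δ₀ := by ring

lemma oneD_ordered (hBc : IsClosed B) (hB0 : (0:ℝ) ∈ B) (hB1 : (1:ℝ) ∈ B)
    (hM : ∀ x ∈ B, |h x| ≤ M)
    (hmod : ∀ x ∈ B, ∀ y ∈ B, |x - y| ≤ δ₀ → |h x - h y| ≤ ε)
    (hδ₀ : 0 < δ₀) (hε : 0 ≤ ε) (hδδ₀ : δ ≤ δ₀)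
    {u u' : ℝ} (hu : u ∈ Icc (0:ℝ) 1) (hu' : u' ∈ Icc (0:ℝ) 1)
    (hle : u ≤ u') (hclose : u' - u ≤ δ) :
    |affExt B h u - affExt B h u'| ≤ 4*ε + 4*M*δ/δ₀ := by
  have hM0 : 0 ≤ M := M_nonneg hB0 hM
  have hδ0 : 0 ≤ δ := le_trans (by linarith) hclose
  have hnn : 0 ≤ 2*M*δ/δ₀ := div_nonneg (mul_nonneg (by linarith) hδ0) hδ₀.le
  by_cases huB : u ∈ B
  · rw [affExt_eq_of_mem huB]
    have := fromF hBc hB0 hB1 hM hmod hδ₀ hε hδδ₀ huB hu' hle hclose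
    have hring : 2*M*δ/δ₀ + 2*M*δ/δ₀ = 4*M*δ/δ₀ := by ring
    linarith
  · set l := leftN B u with hl_def
    set r := rightN B u with hr_def
    have hlB := (leftN_spec hBc hB0 hu.1).1
    have hrB := (rightN_spec hBc hB1 hu.2).1
    have hl := leftN_lt hBc hB0 hu.1 huB
    have hr := rightN_gt hBc hB1 hu.2 huB
    have hD : 0 < r - l := by linarith
    rcases lt_or_ge u' r with hcase | hcase
    · -- same gap
      have hgap : ∀ v ∈ Ioo l r, v ∉ B := fun v hv => gap_not_mem hv
      have huIoo : u ∈ Ioo l r := ⟨hl, hr⟩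
      have hu'Ioo : u' ∈ Ioo l r := ⟨lt_of_lt_of_le hl hle, hcase⟩
      have hu'B : u' ∉ B := hgap u' hu'Ioo
      have hL : leftN B u' = l := by
        rw [leftN_const hgap hu'Ioo, ← leftN_const hgap huIoo]
      have hR : rightN B u' = r := by
        rw [rightN_const hgap hu'Ioo, ← rightN_const hgap huIoo]
      have hkey : affExt B h u - affExt B h u' = (u - u')/(r - l) * (h r - h l) := by
        rw [affExt_eq_of_not_mem huB, affExt_eq_of_not_mem hu'B, hL, hR, ← hl_def, ← hr_def]
        field_simp
        ring
      rw [hkey, abs_mul]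
      have habs : |(u - u')/(r - l)| = (u' - u)/(r - l) := by
        rw [abs_div, abs_of_nonpos (by linarith), abs_of_nonneg hD.le]; ring
      rw [habs]
      rcases le_or_gt (r - l) δ₀ with hc | hc
      · have hA : |h r - h l| ≤ ε := hmod r hrB l hlB (by rw [abs_of_nonneg (by linarith)]; linarith)
        have hθ1 : (u' - u)/(r - l) ≤ 1 := by
          rw [div_le_one hD]; linarith [hu'Ioo.2, huIoo.1]
        have := mul_le_mul hθ1 hA (abs_nonneg _) zero_le_one
        have hnn4 : 0 ≤ 4*M*δ/δ₀ := div_nonneg (mul_nonneg (by linarith) hδ0) hδ₀.le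
        simp only [one_mul] at this
        linarith
      · have hA : |h r - h l| ≤ 2*M := by
          calc |h r - h l| ≤ |h r| + |h l| := abs_sub _ _
            _ ≤ M + M := add_le_add (hM r hrB) (hM l hlB)
            _ = 2*M := by ring
        have hθ : (u' - u)/(r - l) ≤ δ/δ₀ := by
          exact div_le_div₀ (by linarith) hclose hδ₀ hc.le
        have := mul_le_mul hθ hA (abs_nonneg _) (div_nonneg hδ0 hδ₀.le)
        have heq : δ/δ₀ * (2*M) = 2*M*δ/δ₀ := by ring
        have hring : 2*M*δ/δ₀ + 2*M*δ/δ₀ = 4*M*δ/δ₀ := by ring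
        linarith
    · -- u' beyond the gap
      have h1 : |affExt B h u - h r| ≤ ε + 2*M*(r - u)/δ₀ :=
        halfStep_right hBc hB0 hB1 hM hmod hδ₀ hε hu huB
      have h1' : 2*M*(r - u)/δ₀ ≤ 2*M*δ/δ₀ :=
        div_le_div₀ (by nlinarith) (by nlinarith) hδ₀ le_rfl
      have h2 : |h r - affExt B h u'| ≤ 2*ε + 2*M*δ/δ₀ :=
        fromF hBc hB0 hB1 hM hmod hδ₀ hε hδδ₀ hrB hu' hcase (by linarith)
      calc |affExt B h u - affExt B h u'|
          ≤ |affExt B h u - h r| + |h r - affExt B h u'| := abs_sub_le _ _ _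
        _ ≤ 4*ε + 4*M*δ/δ₀ := by
            have hring : 2*M*δ/δ₀ + 2*M*δ/δ₀ = 4*M*δ/δ₀ := by ring
            linarith

lemma oneD (hBc : IsClosed B) (hB0 : (0:ℝ) ∈ B) (hB1 : (1:ℝ) ∈ B)
    (hM : ∀ x ∈ B, |h x| ≤ M)
    (hmod : ∀ x ∈ B, ∀ y ∈ B, |x - y| ≤ δ₀ → |h x - h y| ≤ ε)
    (hδ₀ : 0 < δ₀) (hε : 0 ≤ ε) (hδδ₀ : δ ≤ δ₀)
    {u u' : ℝ} (hu : u ∈ Icc (0:ℝ) 1) (hu' : u' ∈ Icc (0:ℝ) 1)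
    (hclose : |u - u'| ≤ δ) :
    |affExt B h u - affExt B h u'| ≤ 4*ε + 4*M*δ/δ₀ := by
  rcases le_total u u' with hle | hle
  · exact oneD_ordered hBc hB0 hB1 hM hmod hδ₀ hε hδδ₀ hu hu' hle
      (le_trans (le_abs_self _) (by rwa [abs_sub_comm] at hclose))
  · rw [abs_sub_comm]
    exact oneD_ordered hBc hB0 hB1 hM hmod hδ₀ hε hδδ₀ hu' hu hle
      (le_trans (le_abs_self _) hclose)
end Quant

section Comb

lemma sumProdOne {d : ℕ} (c : Fin d → Bool → ℝ) (hc : ∀ j, c j false + c j true = 1) :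
    ∑ ε : Fin d → Bool, ∏ j, c j (ε j) = 1 := by
  have h := Finset.prod_univ_sum (fun _ : Fin d => (Finset.univ : Finset Bool)) c
  rw [Fintype.piFinset_univ] at h
  rw [← h]
  apply Finset.prod_eq_one
  intro j _
  rw [Fintype.sum_bool]
  linarith [hc j]

lemma pair_sum {d : ℕ} (i : Fin d) (A : (Fin d → Bool) → ℝ) :
    ∑ ε : Fin d → Bool, A ε
      = ∑ ε : Fin d → Bool,
          if ε i = false then A ε + A (Function.update ε i true) else 0 := by
  have hsplit := Finset.sum_filter_add_sum_filter_not Finset.univ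
    (fun ε : Fin d → Bool => ε i = false) A
  rw [← hsplit]
  have hR : (∑ ε : Fin d → Bool,
      if ε i = false then A ε + A (Function.update ε i true) else 0)
      = ∑ ε ∈ Finset.univ.filter (fun ε : Fin d → Bool => ε i = false),
          (A ε + A (Function.update ε i true)) := (Finset.sum_filter _ _).symm
  rw [hR, Finset.sum_add_distrib]
  congr 1
  apply Finset.sum_nbij' (fun ε => Function.update ε i false)
    (fun ε => Function.update ε i true)
  · intro a ha
    simp [Finset.mem_filter]
  · intro a ha
    simp only [Finset.mem_filter, Finset.mem_univ, true_and] at ha ⊢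
    simp
  · intro a ha
    simp only [Finset.mem_filter, Finset.mem_univ, true_and] at ha
    funext j
    by_cases hj : j = i
    · subst hj
      simp only [Function.update_self]
      cases hab : a j
      · exact absurd hab ha
      · rfl
    · simp [Function.update_of_ne hj]
  · intro a ha
    simp only [Finset.mem_filter, Finset.mem_univ, true_and] at ha
    funext j
    by_cases hj : j = i
    · subst hj; simp [Function.update_self, ha]
    · simp [Function.update_of_ne hj]
  · intro a ha
    simp only [Finset.mem_filter, Finset.mem_univ, true_and] at ha
    have : Function.update (Function.update a i false) i true = a := by
      funext j
      by_cases hj : j = i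
      · subst hj
        simp only [Function.update_self]
        cases hab : a j
        · exact absurd hab ha
        · rfl
      · simp [Function.update_of_ne hj]
    simp [this]

end Comb
section MultiDim
open Topology Filter
variable {d : ℕ} {F : Fin d → Set ℝ} {f : (Fin d → ℝ) → ℝ}

lemma multiExt_eqOn {t : Fin d → ℝ} (ht : t ∈ Set.pi Set.univ F) :
    multiExt F f t = f t := by
  unfold multiExt
  have hmem : ∀ j, t j ∈ F j := fun j => ht j (Set.mem_univ j)
  have hnbr : ∀ ε : Fin d → Bool, (fun j => nbr (F j) (t j) (ε j)) = t := by
    intro ε; funext j; unfold nbr; simp [hmem j]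
  calc ∑ ε : Fin d → Bool, (∏ j, wt (F j) (t j) (ε j)) * f (fun j => nbr (F j) (t j) (ε j))
      = ∑ ε : Fin d → Bool, (∏ j, wt (F j) (t j) (ε j)) * f t := by
        apply Finset.sum_congr rfl; intro ε _; rw [hnbr ε]
    _ = (∑ ε : Fin d → Bool, ∏ j, wt (F j) (t j) (ε j)) * f t := (Finset.sum_mul _ _ _).symm
    _ = 1 * f t := by rw [sumProdOne _ (fun j => wt_add (t j))]
    _ = f t := one_mul _

lemma multiExt_update (i : Fin d) (s : Fin d → ℝ) (u : ℝ) :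
    multiExt F f (Function.update s i u)
      = ∑ ε : Fin d → Bool,
          if ε i = false then
            (∏ j ∈ Finset.univ.erase i, wt (F j) (s j) (ε j)) *
              affExt (F i)
                (fun v => f (Function.update (fun j => nbr (F j) (s j) (ε j)) i v)) u
          else 0 := by
  unfold multiExt
  rw [pair_sum i]
  apply Finset.sum_congr rfl
  intro ε _
  by_cases hεi : ε i = false
  · rw [if_pos hεi, if_pos hεi]
    set N : Fin d → ℝ := fun j => nbr (F j) (s j) (ε j) with hN
    set W : ℝ := ∏ j ∈ Finset.univ.erase i, wt (F j) (s j) (ε j) with hW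
    have hprod : ∀ b : Bool,
        (∏ j, wt (F j) (Function.update s i u j) (Function.update ε i b j))
          = wt (F i) u b * W := by
      intro b
      rw [← Finset.mul_prod_erase Finset.univ _ (Finset.mem_univ i)]
      congr 1
      · simp
      · apply Finset.prod_congr rfl
        intro j hj
        have hji : j ≠ i := (Finset.mem_erase.1 hj).1
        rw [Function.update_of_ne hji, Function.update_of_ne hji]
    have hprod0 : (∏ j, wt (F j) (Function.update s i u j) (ε j)) = wt (F i) u false * W := by
      have h := hprod false
      rw [← h]
      apply Finset.prod_congr rfl
      intro j _
      by_cases hj : j = i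
      · subst hj; simp [hεi]
      · simp [Function.update_of_ne hj]
    have hnbr : ∀ b : Bool,
        (fun j => nbr (F j) (Function.update s i u j) (Function.update ε i b j))
          = Function.update N i (nbr (F i) u b) := by
      intro b
      funext j
      by_cases hj : j = i
      · subst hj; simp
      · rw [Function.update_of_ne hj, Function.update_of_ne hj, Function.update_of_ne hj]
    have hnbr0 : (fun j => nbr (F j) (Function.update s i u j) (ε j))
        = Function.update N i (nbr (F i) u false) := by
      rw [← hnbr false]
      funext j
      by_cases hj : j = i
      · subst hj; simp [hεi]
      · simp [Function.update_of_ne hj]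
    rw [hprod true, hnbr true, hprod0, hnbr0,
      ← wt_mul_add_wt_mul (fun v => f (Function.update N i v)) u]
    ring
  · rw [if_neg hεi, if_neg hεi]

lemma sum_erase_wt (i : Fin d) (s : Fin d → ℝ) :
    (∑ ε : Fin d → Bool,
      if ε i = false then ∏ j ∈ Finset.univ.erase i, wt (F j) (s j) (ε j) else 0) = 1 := by
  have hc : ∀ j, (fun j b => if j = i then (if b = false then (1:ℝ) else 0)
      else wt (F j) (s j) b) j false
      + (fun j b => if j = i then (if b = false then (1:ℝ) else 0)
      else wt (F j) (s j) b) j true = 1 := by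
    intro j
    by_cases h : j = i
    · simp [h]
    · simp only [h, if_false]; exact wt_add (s j)
  have h := sumProdOne (fun j b => if j = i then (if b = false then (1:ℝ) else 0)
      else wt (F j) (s j) b) hc
  rw [← h]
  apply Finset.sum_congr rfl
  intro ε _
  rw [← Finset.mul_prod_erase Finset.univ _ (Finset.mem_univ i)]
  simp only [if_pos rfl]
  have herase : (∏ j ∈ Finset.univ.erase i,
      (if j = i then (if ε j = false then (1:ℝ) else 0) else wt (F j) (s j) (ε j)))
      = ∏ j ∈ Finset.univ.erase i, wt (F j) (s j) (ε j) := by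
    apply Finset.prod_congr rfl
    intro j hj
    rw [if_neg (Finset.mem_erase.1 hj).1]
  rw [herase]
  by_cases h : ε i = false <;> simp [h]

lemma coordBound (hFsub : ∀ i, F i ⊆ Set.Icc (0:ℝ) 1) (hFc : ∀ i, IsClosed (F i))
    (h0 : ∀ i, (0:ℝ) ∈ F i) (h1 : ∀ i, (1:ℝ) ∈ F i)
    {M ε δ₀ δ : ℝ}
    (hM : ∀ x ∈ Set.pi Set.univ F, |f x| ≤ M)
    (hmod : ∀ x ∈ Set.pi Set.univ F, ∀ y ∈ Set.pi Set.univ F,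
      dist x y ≤ δ₀ → |f x - f y| ≤ ε)
    (hδ₀ : 0 < δ₀) (hε : 0 ≤ ε) (hδδ₀ : δ ≤ δ₀)
    (i : Fin d) {s : Fin d → ℝ} (hs : s ∈ cube d) {u u' : ℝ}
    (hu : u ∈ Icc (0:ℝ) 1) (hu' : u' ∈ Icc (0:ℝ) 1) (hclose : |u - u'| ≤ δ) :
    |multiExt F f (Function.update s i u) - multiExt F f (Function.update s i u')|
      ≤ 4*ε + 4*M*δ/δ₀ := by
  have hsj : ∀ j, s j ∈ Icc (0:ℝ) 1 := fun j => hs j (Set.mem_univ j)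
  set N : (Fin d → Bool) → Fin d → ℝ := fun ε j => nbr (F j) (s j) (ε j) with hN
  have hNmem : ∀ (ε : Fin d → Bool) (v : ℝ), v ∈ F i →
      Function.update (N ε) i v ∈ Set.pi Set.univ F := by
    intro ε v hv j _
    by_cases hj : j = i
    · subst hj; simpa using hv
    · rw [Function.update_of_ne hj]
      exact nbr_mem (hFc j) (h0 j) (h1 j) (hsj j) (ε j)
  rw [multiExt_update, multiExt_update, ← Finset.sum_sub_distrib]
  have hterm : ∀ ε' : Fin d → Bool,
      ((if ε' i = false then
          (∏ j ∈ Finset.univ.erase i, wt (F j) (s j) (ε' j)) *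
            affExt (F i) (fun v => f (Function.update (N ε') i v)) u else 0)
        - (if ε' i = false then
          (∏ j ∈ Finset.univ.erase i, wt (F j) (s j) (ε' j)) *
            affExt (F i) (fun v => f (Function.update (N ε') i v)) u' else 0))
      = (if ε' i = false then
          (∏ j ∈ Finset.univ.erase i, wt (F j) (s j) (ε' j)) *
            (affExt (F i) (fun v => f (Function.update (N ε') i v)) u
              - affExt (F i) (fun v => f (Function.update (N ε') i v)) u') else 0) := by
    intro ε'
    by_cases h : ε' i = false <;> simp [h] <;> ring
  calc |∑ ε' : Fin d → Bool,
        ((if ε' i = false then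
            (∏ j ∈ Finset.univ.erase i, wt (F j) (s j) (ε' j)) *
              affExt (F i) (fun v => f (Function.update (N ε') i v)) u else 0)
          - (if ε' i = false then
            (∏ j ∈ Finset.univ.erase i, wt (F j) (s j) (ε' j)) *
              affExt (F i) (fun v => f (Function.update (N ε') i v)) u' else 0))|
      ≤ ∑ ε' : Fin d → Bool,
          (if ε' i = false then ∏ j ∈ Finset.univ.erase i, wt (F j) (s j) (ε' j) else 0)
            * (4*ε + 4*M*δ/δ₀) := by
        refine le_trans (Finset.abs_sum_le_sum_abs _ _) (Finset.sum_le_sum ?_)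
        intro ε' _
        rw [hterm ε']
        by_cases h : ε' i = false
        · rw [if_pos h, if_pos h, abs_mul]
          have hWnn : 0 ≤ ∏ j ∈ Finset.univ.erase i, wt (F j) (s j) (ε' j) :=
            Finset.prod_nonneg (fun j _ => wt_nonneg (hFc j) (h0 j) (h1 j) (hsj j) (ε' j))
          rw [abs_of_nonneg hWnn]
          apply mul_le_mul_of_nonneg_left ?_ hWnn
          apply oneD (hFc i) (h0 i) (h1 i) ?_ ?_ hδ₀ hε hδδ₀ hu hu' hclose
          · intro x hx
            exact hM _ (hNmem ε' x hx)
          · intro x hx y hy hxy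
            apply hmod _ (hNmem ε' x hx) _ (hNmem ε' y hy)
            rw [dist_pi_le_iff hδ₀.le]
            intro j
            by_cases hj : j = i
            · subst hj; simp [Real.dist_eq, hxy]
            · rw [Function.update_of_ne hj, Function.update_of_ne hj]
              simp [hδ₀.le]
        · simp [h]
    _ = (∑ ε' : Fin d → Bool,
          (if ε' i = false then ∏ j ∈ Finset.univ.erase i, wt (F j) (s j) (ε' j) else 0))
            * (4*ε + 4*M*δ/δ₀) := (Finset.sum_mul _ _ _).symm
    _ = 4*ε + 4*M*δ/δ₀ := by rw [sum_erase_wt]; ring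

lemma multiExt_uc (hFsub : ∀ i, F i ⊆ Set.Icc (0:ℝ) 1) (hFc : ∀ i, IsClosed (F i))
    (h0 : ∀ i, (0:ℝ) ∈ F i) (h1 : ∀ i, (1:ℝ) ∈ F i)
    (hf : ContinuousOn f (Set.pi Set.univ F)) :
    ∀ ε' > (0:ℝ), ∃ δ > (0:ℝ), ∀ t ∈ cube d, ∀ t' ∈ cube d, dist t t' ≤ δ →
      |multiExt F f t - multiExt F f t'| ≤ ε' := by
  intro ε' hε'
  have hK : IsCompact (Set.pi Set.univ F) :=
    isCompact_univ_pi (fun i => IsCompact.of_isClosed_subset isCompact_Icc (hFc i) (hFsub i))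
  obtain ⟨M, hM⟩ := hK.exists_bound_of_continuousOn hf
  set M' : ℝ := max M 0 with hM'def
  have hM'0 : 0 ≤ M' := le_max_right _ _
  have hM' : ∀ x ∈ Set.pi Set.univ F, |f x| ≤ M' := by
    intro x hx
    exact le_trans (by rw [← Real.norm_eq_abs]; exact hM x hx) (le_max_left _ _)
  set D : ℝ := (d:ℝ) + 1 with hD
  have hD0 : (0:ℝ) < D := by positivity
  set ε₁ : ℝ := ε' / (8 * D) with hε₁
  have hε₁0 : 0 < ε₁ := by positivity
  have hUC := (Metric.uniformContinuousOn_iff_le.1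
    (hK.uniformContinuousOn_of_continuous hf)) ε₁ hε₁0
  obtain ⟨δ₀, hδ₀, hmod0⟩ := hUC
  have hmod : ∀ x ∈ Set.pi Set.univ F, ∀ y ∈ Set.pi Set.univ F,
      dist x y ≤ δ₀ → |f x - f y| ≤ ε₁ := by
    intro x hx y hy hxy
    rw [← Real.dist_eq]
    exact hmod0 x hx y hy hxy
  set δ : ℝ := min δ₀ (ε' * δ₀ / (8 * D * (M' + 1))) with hδdef
  have hδ0 : 0 < δ := by
    apply lt_min hδ₀
    have : (0:ℝ) < M' + 1 := by linarith
    positivity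
  refine ⟨δ, hδ0, ?_⟩
  intro t ht t' ht' hdist
  -- per-step bound
  have hstep : 4*ε₁ + 4*M'*δ/δ₀ ≤ ε' / D := by
    have hM'1 : (0:ℝ) < M' + 1 := by linarith
    have h4 : 4*M'*δ/δ₀ ≤ 4*M'*(ε' * δ₀ / (8 * D * (M' + 1)))/δ₀ := by
      apply div_le_div₀ ?_ ?_ hδ₀ le_rfl
      · have : (0:ℝ) ≤ ε' * δ₀ / (8 * D * (M' + 1)) := by positivity
        nlinarith
      · have := min_le_right δ₀ (ε' * δ₀ / (8 * D * (M' + 1)))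
        nlinarith [this]
    have h5 : 4*M'*(ε' * δ₀ / (8 * D * (M' + 1)))/δ₀ = 4*M'*ε' / (8 * D * (M' + 1)) := by
      field_simp
    have h6 : 4*M'*ε' / (8 * D * (M' + 1)) ≤ ε' / (2*D) := by
      rw [div_le_div_iff₀ (by positivity) (by positivity)]
      nlinarith
    have h7 : 4*ε₁ = ε' / (2*D) := by
      rw [hε₁]; field_simp; ring
    have h8 : ε' / (2*D) + ε' / (2*D) = ε' / D := by
      field_simp; ring
    linarith
  -- telescoping
  set seq : ℕ → (Fin d → ℝ) := fun k j => if (j:ℕ) < k then t j else t' j with hseq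
  have hs0 : seq 0 = t' := by funext j; simp [hseq]
  have hsd : seq d = t := by funext j; simp [hseq, j.isLt]
  have hseqcube : ∀ k, seq k ∈ cube d := by
    intro k j _
    by_cases h : (j:ℕ) < k
    · simpa [hseq, h] using ht j (Set.mem_univ j)
    · simpa [hseq, h] using ht' j (Set.mem_univ j)
  have htel : multiExt F f t - multiExt F f t'
      = ∑ k ∈ Finset.range d, (multiExt F f (seq (k+1)) - multiExt F f (seq k)) := by
    rw [Finset.sum_range_sub (fun k => multiExt F f (seq k)), hs0, hsd]
  have hstepk : ∀ k < d, |multiExt F f (seq (k+1)) - multiExt F f (seq k)| ≤ ε' / D := by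
    intro k hk
    set i : Fin d := ⟨k, hk⟩ with hi
    have hival : (i:ℕ) = k := rfl
    have e1 : seq (k+1) = Function.update (seq k) i (t i) := by
      funext j
      by_cases hj : j = i
      · subst hj
        simp [hseq, Function.update_self, hival]
      · have hj' : (j:ℕ) ≠ k := by
          intro hc; exact hj (Fin.ext (by rw [hc, hival]))
        rw [Function.update_of_ne hj]
        by_cases h2 : (j:ℕ) < k
        · simp [hseq, h2, Nat.lt_succ_of_lt h2]
        · have h3 : ¬ (j:ℕ) < k + 1 := by omega
          simp [hseq, h2, h3]
    have e2 : seq k = Function.update (seq k) i (t' i) := by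
      funext j
      by_cases hj : j = i
      · subst hj
        simp [hseq, Function.update_self, hival]
      · rw [Function.update_of_ne hj]
    have hcb := coordBound hFsub hFc h0 h1 hM' hmod hδ₀
      hε₁0.le (min_le_left _ _) i (hseqcube k)
      (ht i (Set.mem_univ i)) (ht' i (Set.mem_univ i))
      (by rw [← Real.dist_eq]; exact le_trans (dist_le_pi_dist t t' i) hdist)
    rw [← e1, ← e2] at hcb
    exact le_trans hcb hstep
  rw [htel]
  calc |∑ k ∈ Finset.range d, (multiExt F f (seq (k+1)) - multiExt F f (seq k))|
      ≤ ∑ k ∈ Finset.range d, |multiExt F f (seq (k+1)) - multiExt F f (seq k)| :=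
        Finset.abs_sum_le_sum_abs _ _
    _ ≤ ∑ _k ∈ Finset.range d, ε' / D := by
        apply Finset.sum_le_sum
        intro k hk
        exact hstepk k (Finset.mem_range.1 hk)
    _ = (d:ℝ) * (ε' / D) := by
        rw [Finset.sum_const, Finset.card_range, nsmul_eq_mul]
    _ ≤ ε' := by
        rw [hD]
        rw [mul_div_assoc']
        rw [div_le_iff₀ hD0]
        nlinarith [hε'.le, hD0]

lemma multiExt_cont (hFsub : ∀ i, F i ⊆ Set.Icc (0:ℝ) 1) (hFc : ∀ i, IsClosed (F i))
    (h0 : ∀ i, (0:ℝ) ∈ F i) (h1 : ∀ i, (1:ℝ) ∈ F i)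
    (hf : ContinuousOn f (Set.pi Set.univ F)) :
    ContinuousOn (multiExt F f) (cube d) := by
  rw [Metric.continuousOn_iff]
  intro t ht ε' hε'
  obtain ⟨δ, hδ, H⟩ := multiExt_uc hFsub hFc h0 h1 hf (ε'/2) (half_pos hε')
  refine ⟨δ, hδ, ?_⟩
  intro t' ht' hd
  have := H t' ht' t ht hd.le
  rw [Real.dist_eq]
  linarith [half_lt_self hε']

lemma multiExt_affine (i : Fin d) (t : Fin d → ℝ) {a b : ℝ}
    (hab : Set.Ioo a b ⊆ Set.Icc (0:ℝ) 1 \ F i) :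
    ∃ c e : ℝ, ∀ u ∈ Set.Ioo a b,
      multiExt F f (Function.update t i u) = c * u + e := by
  classical
  set L := leftN (F i) a with hLdef
  set R := rightN (F i) b with hRdef
  set W : (Fin d → Bool) → ℝ := fun ε => ∏ j ∈ Finset.univ.erase i, wt (F j) (t j) (ε j)
    with hWdef
  set C : (Fin d → Bool) → ℝ := fun ε =>
    f (Function.update (fun j => nbr (F j) (t j) (ε j)) i (if ε i then R else L)) with hCdef
  refine ⟨∑ ε : Fin d → Bool, (if ε i then 1/(R-L) else -(1/(R-L))) * W ε * C ε,
          ∑ ε : Fin d → Bool, (if ε i then -(L/(R-L)) else 1 + L/(R-L)) * W ε * C ε, ?_⟩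
  intro u hu
  have hgap : ∀ v ∈ Set.Ioo a b, v ∉ F i := fun v hv => (hab hv).2
  have huF : u ∉ F i := hgap u hu
  have hL : leftN (F i) u = L := leftN_const hgap hu
  have hR : rightN (F i) u = R := rightN_const hgap hu
  unfold multiExt
  rw [Finset.sum_mul, ← Finset.sum_add_distrib]
  apply Finset.sum_congr rfl
  intro ε _
  have hprod : (∏ j, wt (F j) (Function.update t i u j) (ε j))
      = wt (F i) u (ε i) * W ε := by
    rw [← Finset.mul_prod_erase Finset.univ _ (Finset.mem_univ i)]
    congr 1
    · simp
    · apply Finset.prod_congr rfl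
      intro j hj
      rw [Function.update_of_ne (Finset.mem_erase.1 hj).1]
  have hfeq : (fun j => nbr (F j) (Function.update t i u j) (ε j))
      = Function.update (fun j => nbr (F j) (t j) (ε j)) i (if ε i then R else L) := by
    funext j
    by_cases hj : j = i
    · subst hj
      simp only [Function.update_self]
      unfold nbr
      rw [if_neg huF]
      cases hb : ε j
      · simp [hL]
      · simp [hR]
    · rw [Function.update_of_ne hj, Function.update_of_ne hj]
  have hwt : wt (F i) u (ε i)
      = if ε i then (u - L)/(R - L) else 1 - (u - L)/(R - L) := by
    unfold wt
    rw [if_neg huF, hL, hR]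
  rw [hprod, hfeq, hwt]
  cases hb : ε i <;> simp only [hCdef, hb, if_true, if_false, Bool.false_eq_true] <;> ring

lemma endpointVal {g : (Fin d → ℝ) → ℝ} (hg : ContinuousOn g (cube d))
    {t : Fin d → ℝ} (ht : t ∈ cube d) (i : Fin d) {l r c e : ℝ} (hlr : l < r)
    (hl : l ∈ Set.Icc (0:ℝ) 1) (hr : r ∈ Set.Icc (0:ℝ) 1)
    (H : ∀ u ∈ Set.Ioo l r, g (Function.update t i u) = c * u + e) :
    g (Function.update t i l) = c * l + e ∧ g (Function.update t i r) = c * r + e := by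
  set φ : ℝ → ℝ := fun u => g (Function.update t i u) with hφ
  have hmap : ∀ u ∈ Set.Icc (0:ℝ) 1, Function.update t i u ∈ cube d := by
    intro u hu j _
    by_cases hj : j = i
    · subst hj; simpa using hu
    · rw [Function.update_of_ne hj]; exact ht j (Set.mem_univ j)
  have hφc : ContinuousOn φ (Set.Icc (0:ℝ) 1) := by
    apply hg.comp ((continuous_const.update i continuous_id).continuousOn) hmap
  have hIoo : Set.Ioo l r ⊆ Set.Icc (0:ℝ) 1 :=
    fun v hv => ⟨le_trans hl.1 hv.1.le, le_trans hv.2.le hr.2⟩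
  have haff : Continuous (fun u : ℝ => c * u + e) := by continuity
  constructor
  · haveI := left_nhdsWithin_Ioo_neBot hlr
    have h1 : Filter.Tendsto φ (𝓝[Set.Ioo l r] l) (𝓝 (φ l)) :=
      ((hφc l hl).mono hIoo).tendsto
    have h2 : Filter.Tendsto φ (𝓝[Set.Ioo l r] l) (𝓝 (c * l + e)) := by
      apply Filter.Tendsto.congr' ?_ ((haff.tendsto l).mono_left nhdsWithin_le_nhds)
      filter_upwards [eventually_mem_nhdsWithin] with x hx
      exact (H x hx).symm
    exact tendsto_nhds_unique h1 h2
  · haveI := right_nhdsWithin_Ioo_neBot hlr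
    have h1 : Filter.Tendsto φ (𝓝[Set.Ioo l r] r) (𝓝 (φ r)) :=
      ((hφc r hr).mono hIoo).tendsto
    have h2 : Filter.Tendsto φ (𝓝[Set.Ioo l r] r) (𝓝 (c * r + e)) := by
      apply Filter.Tendsto.congr' ?_ ((haff.tendsto r).mono_left nhdsWithin_le_nhds)
      filter_upwards [eventually_mem_nhdsWithin] with x hx
      exact (H x hx).symm
    exact tendsto_nhds_unique h1 h2

lemma uniq (hFsub : ∀ i, F i ⊆ Set.Icc (0:ℝ) 1) (hFc : ∀ i, IsClosed (F i))
    (h0 : ∀ i, (0:ℝ) ∈ F i) (h1 : ∀ i, (1:ℝ) ∈ F i)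
    {g₁ g₂ : (Fin d → ℝ) → ℝ}
    (hc₁ : ContinuousOn g₁ (cube d)) (he₁ : ∀ t ∈ Set.pi Set.univ F, g₁ t = f t)
    (ha₁ : ∀ i : Fin d, ∀ t ∈ cube d, ∀ a b : ℝ,
      Set.Ioo a b ⊆ Set.Icc (0:ℝ) 1 \ F i →
      ∃ c e : ℝ, ∀ u ∈ Set.Ioo a b, g₁ (Function.update t i u) = c * u + e)
    (hc₂ : ContinuousOn g₂ (cube d)) (he₂ : ∀ t ∈ Set.pi Set.univ F, g₂ t = f t)
    (ha₂ : ∀ i : Fin d, ∀ t ∈ cube d, ∀ a b : ℝ,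
      Set.Ioo a b ⊆ Set.Icc (0:ℝ) 1 \ F i →
      ∃ c e : ℝ, ∀ u ∈ Set.Ioo a b, g₂ (Function.update t i u) = c * u + e) :
    ∀ t ∈ cube d, g₁ t = g₂ t := by
  classical
  suffices H : ∀ n : ℕ, ∀ t ∈ cube d,
      (Finset.univ.filter (fun j => t j ∉ F j)).card ≤ n → g₁ t = g₂ t by
    exact fun t ht => H _ t ht le_rfl
  intro n
  induction n with
  | zero =>
    intro t ht hcard
    have hF : t ∈ Set.pi Set.univ F := by
      intro j _
      by_contra hj
      have : j ∈ Finset.univ.filter (fun j => t j ∉ F j) := by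
        simp [Finset.mem_filter, hj]
      have := Finset.card_pos.2 ⟨j, this⟩
      omega
    rw [he₁ t hF, he₂ t hF]
  | succ n ih =>
    intro t ht hcard
    by_cases hex : ∃ i, t i ∉ F i
    · obtain ⟨i, hi⟩ := hex
      have hti : t i ∈ Set.Icc (0:ℝ) 1 := ht i (Set.mem_univ i)
      set l := leftN (F i) (t i) with hldef
      set r := rightN (F i) (t i) with hrdef
      have hlB := (leftN_spec (hFc i) (h0 i) hti.1).1
      have hrB := (rightN_spec (hFc i) (h1 i) hti.2).1
      have hl := leftN_lt (hFc i) (h0 i) hti.1 hi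
      have hr := rightN_gt (hFc i) (h1 i) hti.2 hi
      have hlr : l < r := lt_trans hl hr
      have hlI : l ∈ Set.Icc (0:ℝ) 1 := hFsub i hlB
      have hrI : r ∈ Set.Icc (0:ℝ) 1 := hFsub i hrB
      have hsub : Set.Ioo l r ⊆ Set.Icc (0:ℝ) 1 \ F i := by
        intro v hv
        exact ⟨⟨le_trans hlI.1 hv.1.le, le_trans hv.2.le hrI.2⟩, gap_not_mem hv⟩
      obtain ⟨c₁, e₁, H₁⟩ := ha₁ i t ht l r hsub
      obtain ⟨c₂, e₂, H₂⟩ := ha₂ i t ht l r hsub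
      have hep₁ := endpointVal hc₁ ht i hlr hlI hrI H₁
      have hep₂ := endpointVal hc₂ ht i hlr hlI hrI H₂
      have hcube_upd : ∀ v ∈ Set.Icc (0:ℝ) 1, Function.update t i v ∈ cube d := by
        intro v hv j _
        by_cases hj : j = i
        · subst hj; simpa using hv
        · rw [Function.update_of_ne hj]; exact ht j (Set.mem_univ j)
      have hcard_upd : ∀ v ∈ F i,
          (Finset.univ.filter (fun j => Function.update t i v j ∉ F j)).card ≤ n := by
        intro v hv
        have hsub2 : Finset.univ.filter (fun j => Function.update t i v j ∉ F j)
            ⊆ (Finset.univ.filter (fun j => t j ∉ F j)).erase i := by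
          intro j hj
          simp only [Finset.mem_filter, Finset.mem_univ, true_and] at hj
          by_cases hji : j = i
          · subst hji
            rw [Function.update_self] at hj
            exact absurd hv hj
          · rw [Function.update_of_ne hji] at hj
            simp [Finset.mem_erase, hji, hj]
        have hmemi : i ∈ Finset.univ.filter (fun j => t j ∉ F j) := by
          simp [hi]
        have := Finset.card_le_card hsub2
        rw [Finset.card_erase_of_mem hmemi] at this
        omega
      have hIH_l : g₁ (Function.update t i l) = g₂ (Function.update t i l) :=
        ih _ (hcube_upd l hlI) (hcard_upd l hlB)
      have hIH_r : g₁ (Function.update t i r) = g₂ (Function.update t i r) :=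
        ih _ (hcube_upd r hrI) (hcard_upd r hrB)
      rw [hep₁.1, hep₂.1] at hIH_l
      rw [hep₁.2, hep₂.2] at hIH_r
      have hc : c₁ = c₂ := by
        have h9 : c₁ * (r - l) = c₂ * (r - l) := by linarith
        exact mul_right_cancel₀ (sub_ne_zero.2 hlr.ne') h9
      have he : e₁ = e₂ := by rw [hc] at hIH_l; linarith
      have hti_mem : t i ∈ Set.Ioo l r := ⟨hl, hr⟩
      calc g₁ t = g₁ (Function.update t i (t i)) := by rw [Function.update_eq_self]
        _ = c₁ * t i + e₁ := H₁ (t i) hti_mem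
        _ = c₂ * t i + e₂ := by rw [hc, he]
        _ = g₂ (Function.update t i (t i)) := (H₂ (t i) hti_mem).symm
        _ = g₂ t := by rw [Function.update_eq_self]
    · push_neg at hex
      have hF : t ∈ Set.pi Set.univ F := fun j _ => hex j
      rw [he₁ t hF, he₂ t hF]

end MultiDim

/-- existence and uniqueness of the multiaffine extension: there is a unique
continuous `g : [0,1]^d → ℝ` equal to `f` on `F = F₁ × ⋯ × F_d` whose one-dimensional cuts
are affine on each interval contained in `[0,1] \ F_i`. -/
theorem stmt9 (d : ℕ) (hd : 1 ≤ d) (F : Fin d → Set ℝ)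
    (hFsub : ∀ i, F i ⊆ Set.Icc (0:ℝ) 1) (hFc : ∀ i, IsClosed (F i))
    (h0 : ∀ i, (0:ℝ) ∈ F i) (h1 : ∀ i, (1:ℝ) ∈ F i)
    (f : (Fin d → ℝ) → ℝ) (hf : ContinuousOn f (Set.pi Set.univ F)) :
    ∃ g : (Fin d → ℝ) → ℝ,
      (ContinuousOn g (cube d) ∧
        (∀ t ∈ Set.pi Set.univ F, g t = f t) ∧
        (∀ i : Fin d, ∀ t ∈ cube d, ∀ a b : ℝ,
          Set.Ioo a b ⊆ Set.Icc (0:ℝ) 1 \ F i →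
          ∃ c e : ℝ, ∀ u ∈ Set.Ioo a b, g (Function.update t i u) = c * u + e)) ∧
      (∀ g' : (Fin d → ℝ) → ℝ,
        (ContinuousOn g' (cube d) ∧
          (∀ t ∈ Set.pi Set.univ F, g' t = f t) ∧
          (∀ i : Fin d, ∀ t ∈ cube d, ∀ a b : ℝ,
            Set.Ioo a b ⊆ Set.Icc (0:ℝ) 1 \ F i →
            ∃ c e : ℝ, ∀ u ∈ Set.Ioo a b, g' (Function.update t i u) = c * u + e)) →
        ∀ t ∈ cube d, g' t = g t) := by
  refine ⟨multiExt F f, ⟨multiExt_cont hFsub hFc h0 h1 hf,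
    fun t ht => multiExt_eqOn ht,
    fun i t _ht a b hab => multiExt_affine i t hab⟩, ?_⟩
  rintro g' ⟨hc', he', ha'⟩ t ht
  exact uniq hFsub hFc h0 h1 hc' he' ha'
    (multiExt_cont hFsub hFc h0 h1 hf) (fun t ht => multiExt_eqOn ht)
    (fun i t _ht a b hab => multiExt_affine i t hab) t ht
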